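/- Let Δ ∈ ℝ^{n×n} be symmetric with GWM A = nΔ, and let h : ℝ → ℝ be continuous with h(0) = 0. Then h(T_{W_A}) = T_{W_{n·h(Δ)}} as bounded operators on L²[0,1], where h(Δ) is the matrix functional calculus of h at Δ and n·h(Δ) is its associated GWM. -/

import Mathlib

open MeasureTheory Filter

noncomputable section

/-- Lebesgue measure restricted to `[0,1]`. -/
abbrev μ01 : Measure ℝ := volume.restrict (Set.Icc 0 1)

instance : IsFiniteMeasure μ01 := by
  constructor
  rw [Measure.restrict_apply_univ, Real.volume_Icc]
  exact ENNReal.ofReal_lt_top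

/-- The space `L²[0,1]` (complex valued). -/
abbrev L2 := Lp ℂ 2 μ01

instance : ContinuousFunctionalCalculus ℝ (L2 →L[ℂ] L2) IsSelfAdjoint :=
  IsSelfAdjoint.instContinuousFunctionalCalculus

/-- The `j`-th interval `P_j = [j/n, (j+1)/n)` of the standard partition of `[0,1]`
(0-indexed version of `[(j-1)/n, j/n)`). -/
def part (n : ℕ) (j : Fin n) : Set ℝ := Set.Ico ((j : ℝ) / n) (((j : ℝ) + 1) / n)

lemma part_meas (n : ℕ) (j : Fin n) : MeasurableSet (part n j) := measurableSet_Ico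

lemma part_ne_top (n : ℕ) (j : Fin n) : μ01 (part n j) ≠ ⊤ := (measure_lt_top _ _).ne

/-- The graphon `W_B` induced by an `n × n` matrix `B`:
`W_B(u,v) = ∑_{i,j} B i j · 1_{P_i}(u) · 1_{P_j}(v)`. -/
def inducedGraphon {n : ℕ} (B : Matrix (Fin n) (Fin n) ℝ) : ℝ → ℝ → ℝ :=
  fun u v => ∑ i, ∑ j, B i j * (part n i).indicator 1 u * (part n j).indicator 1 v

/-- The graphon signal `ψ_x = ∑_j x_j · 1_{P_j} ∈ L²[0,1]` induced by `x ∈ ℂⁿ`. -/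
def inducedSignal {n : ℕ} (x : Fin n → ℂ) : L2 :=
  ∑ j, indicatorConstLp 2 (part_meas n j) (part_ne_top n j) (x j)

/-- `W` is a graphon: bounded, symmetric and measurable `[0,1]² → ℝ`
(realized as a function on all of `ℝ²`; only its values matter w.r.t. `μ01`). -/
structure IsGraphon (W : ℝ → ℝ → ℝ) : Prop where
  symm : ∀ u v, W u v = W v u
  meas : Measurable (Function.uncurry W)
  bdd : ∃ C, ∀ u v, |W u v| ≤ C

/-- `T` is the graphon shift operator of `W`: `(T f)(v) = ∫₀¹ W(v,u) f(u) du`. -/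
def IsGRSO (W : ℝ → ℝ → ℝ) (T : L2 →L[ℂ] L2) : Prop :=
  ∀ f : L2, ∀ᵐ v ∂μ01, T f v = ∫ u, (W v u : ℂ) * f u ∂μ01

/-- Entrywise complexification of a real activation function. -/
def rhoC (ρ : ℝ → ℝ) (z : ℂ) : ℂ := (ρ z.re : ℂ) + (ρ z.im : ℂ) * Complex.I

/-- The realization of an SCNN (filters `filt`, weights `wt`, activation `ρ`) on a graph with
GSO `Δ`: `graphNet F filt wt ρ Δ x l j` is the `j`-th feature of the `l`-th layer, on input
feature map `x`.  Layer `l+1` is obtained from layer `l` via the filters `filt l j k`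
and weights `wt l j k`. -/
def graphNet (F : ℕ → ℕ) (filt : ℕ → ℕ → ℕ → ℝ → ℝ) (wt : ℕ → ℕ → ℕ → ℝ)
    (ρ : ℝ → ℝ) {n : ℕ} (Δ : Matrix (Fin n) (Fin n) ℝ) (x : ℕ → Fin n → ℂ) :
    ℕ → ℕ → Fin n → ℂ
  | 0, j => x j
  | (l + 1), j => fun v =>
      rhoC ρ (∑ k ∈ Finset.range (F l),
        (wt l j k : ℂ) * (((cfc (filt l j k) Δ).map Complex.ofReal).mulVec
          (graphNet F filt wt ρ Δ x l k)) v)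

/-- `y` is a realization of the SCNN (filters `filt`, weights `wt`, activation `ρ`,
`Lnum` layers, feature dimensions `F`) on the graphon shift operator `T`:
`y l j` is the `j`-th feature of the `l`-th layer, and each layer is obtained from the
previous one by filtering with `cfc (filt l j k) T`, taking weighted sums, and applying
the activation pointwise almost everywhere. -/
def IsGraphonNet (Lnum : ℕ) (F : ℕ → ℕ) (filt : ℕ → ℕ → ℕ → ℝ → ℝ) (wt : ℕ → ℕ → ℕ → ℝ)
    (ρ : ℝ → ℝ) (T : L2 →L[ℂ] L2) (y : ℕ → ℕ → L2) : Prop :=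
  ∀ l < Lnum, ∀ j < F (l + 1),
    ⇑(y (l + 1) j) =ᵐ[μ01]
      fun v => rhoC ρ
        (((∑ k ∈ Finset.range (F l),
          (wt l j k : ℂ) • (cfc (filt l j k) T) (y l k) : L2) : ℝ → ℂ) v)

open scoped ComplexInnerProductSpace

lemma part_subset {n : ℕ} (j : Fin n) : part n j ⊆ Set.Icc 0 1 := by
  intro x hx
  obtain ⟨h1, h2⟩ := hx
  have hn : (0:ℝ) < n := by exact_mod_cast Fin.pos j
  refine ⟨le_trans (by positivity) h1, le_trans h2.le ?_⟩
  rw [div_le_one hn]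
  exact_mod_cast Nat.succ_le_of_lt j.is_lt

lemma meas_part {n : ℕ} (j : Fin n) : μ01 (part n j) = ENNReal.ofReal (1 / n) := by
  rw [Measure.restrict_apply (part_meas n j), Set.inter_eq_left.mpr (part_subset j),
    part, Real.volume_Ico]
  congr 1
  have hn : (0:ℝ) < n := by exact_mod_cast Fin.pos j
  field_simp
  ring

def ind (n : ℕ) (j : Fin n) : L2 := indicatorConstLp 2 (part_meas n j) (part_ne_top n j) (1 : ℂ)

lemma part_disjoint {n : ℕ} {j k : Fin n} (h : j ≠ k) : Disjoint (part n j) (part n k) := by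
  rw [Set.disjoint_left]
  rintro x ⟨hj1, hj2⟩ ⟨hk1, hk2⟩
  have hn : (0:ℝ) < n := by exact_mod_cast Fin.pos j
  apply h
  have h1 : (j:ℝ) < (k:ℝ) + 1 := by
    have := lt_of_le_of_lt hj1 hk2
    rwa [div_lt_div_iff_of_pos_right hn] at this
  have h2 : (k:ℝ) < (j:ℝ) + 1 := by
    have := lt_of_le_of_lt hk1 hj2
    rwa [div_lt_div_iff_of_pos_right hn] at this
  have h1' : (j:ℕ) < (k:ℕ) + 1 := by exact_mod_cast h1
  have h2' : (k:ℕ) < (j:ℕ) + 1 := by exact_mod_cast h2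
  exact Fin.ext (by omega)

lemma inner_ind {n : ℕ} (j k : Fin n) :
    ⟪ind n j, ind n k⟫ = if j = k then ((n:ℂ))⁻¹ else 0 := by
  rw [ind, MeasureTheory.L2.inner_indicatorConstLp_one (part_meas n j) (part_ne_top n j)]
  have hcoe : ∫ x in part n j, (ind n k) x ∂μ01
      = ∫ x in part n j, (part n k).indicator (fun _ => (1:ℂ)) x ∂μ01 := by
    refine integral_congr_ae ?_
    exact MeasureTheory.ae_restrict_of_ae (indicatorConstLp_coeFn)
  rw [hcoe, MeasureTheory.setIntegral_indicator (part_meas n k), MeasureTheory.setIntegral_const]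
  rcases eq_or_ne j k with rfl | hjk
  · rw [Set.inter_self, if_pos rfl, measureReal_def, meas_part, ENNReal.toReal_ofReal (by positivity)]
    have hn : (0:ℝ) < n := by exact_mod_cast Fin.pos j
    simp [Complex.ofReal_inv]
  · rw [if_neg hjk, Set.disjoint_iff_inter_eq_empty.mp (part_disjoint hjk)]
    simp
set_option maxHeartbeats 1000000

def rk (n : ℕ) (i j : Fin n) : L2 →L[ℂ] L2 := (innerSL ℂ (ind n j)).smulRight (ind n i)

lemma rk_apply {n : ℕ} (i j : Fin n) (f : L2) : rk n i j f = ⟪ind n j, f⟫ • ind n i := rfl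

lemma rk_mul {n : ℕ} (i j k l : Fin n) :
    rk n i j * rk n k l = ⟪ind n j, ind n k⟫ • rk n i l := by
  refine ContinuousLinearMap.ext fun f => ?_
  simp only [ContinuousLinearMap.mul_apply, ContinuousLinearMap.smul_apply, rk_apply,
    inner_smul_right, smul_smul]
  ring_nf

lemma rk_star {n : ℕ} (i j : Fin n) : star (rk n i j) = rk n j i := by
  rw [ContinuousLinearMap.star_eq_adjoint]
  symm
  rw [ContinuousLinearMap.eq_adjoint_iff]
  intro x y
  simp only [rk_apply, inner_smul_left, inner_smul_right, starRingEnd_self_apply]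
  ring_nf
  rw [← inner_conj_symm (ind n i) x, starRingEnd_self_apply]
  ring

def matOp (n : ℕ) (B : Matrix (Fin n) (Fin n) ℝ) : L2 →L[ℂ] L2 :=
  ∑ i, ∑ j, (((n : ℝ) * B i j : ℝ) : ℂ) • rk n i j

lemma matOp_apply {n : ℕ} (B : Matrix (Fin n) (Fin n) ℝ) (f : L2) :
    matOp n B f = ∑ i, ∑ j, (((n : ℝ) * B i j : ℝ) : ℂ) • (⟪ind n j, f⟫ • ind n i) := by
  simp only [matOp, ContinuousLinearMap.sum_apply, ContinuousLinearMap.smul_apply, rk_apply]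

lemma inner_ind_matOp {n : ℕ} (B : Matrix (Fin n) (Fin n) ℝ) (f : L2) (j : Fin n) :
    ⟪ind n j, matOp n B f⟫ = ∑ l, ((B j l : ℝ) : ℂ) * ⟪ind n l, f⟫ := by
  have hn : ((n : ℂ)) ≠ 0 := by
    have : 0 < n := Fin.pos j
    exact_mod_cast Nat.cast_ne_zero.mpr this.ne'
  rw [matOp_apply]
  simp only [inner_sum, inner_smul_right, inner_ind, mul_ite, ite_mul, mul_zero, zero_mul,
    Finset.sum_ite_eq, Finset.mem_univ, if_true]
  rw [Finset.sum_eq_single j (fun b _ hb => by simp [if_neg (Ne.symm hb)]) (by simp)]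
  simp only [if_pos rfl, ↓reduceIte]
  refine Finset.sum_congr rfl fun l _ => ?_
  field_simp
  push_cast
  ring

lemma real_smul_op (r : ℝ) (T : L2 →L[ℂ] L2) : r • T = ((r : ℂ)) • T := by
  rw [← smul_one_smul ℂ r T, Complex.real_smul, mul_one]
def Phi (n : ℕ) : Matrix (Fin n) (Fin n) ℝ →⋆ₙₐ[ℝ] (L2 →L[ℂ] L2) where
  toFun := matOp n
  map_smul' r B := by
    show matOp n (r • B) = r • matOp n B
    rw [real_smul_op, matOp, matOp, Finset.smul_sum]
    refine Finset.sum_congr rfl fun i _ => ?_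
    rw [Finset.smul_sum]
    refine Finset.sum_congr rfl fun j _ => ?_
    rw [smul_smul, Matrix.smul_apply, smul_eq_mul]
    congr 1
    push_cast
    ring
  map_zero' := by simp [matOp]
  map_add' B C := by
    show matOp n (B + C) = matOp n B + matOp n C
    rw [matOp, matOp, matOp, ← Finset.sum_add_distrib]
    refine Finset.sum_congr rfl fun i _ => ?_
    rw [← Finset.sum_add_distrib]
    refine Finset.sum_congr rfl fun j _ => ?_
    rw [← add_smul, Matrix.add_apply]
    congr 1
    push_cast
    ring
  map_mul' B C := by
    show matOp n (B * C) = matOp n B * matOp n C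
    refine ContinuousLinearMap.ext fun f => ?_
    rw [ContinuousLinearMap.mul_apply, matOp_apply, matOp_apply]
    refine Finset.sum_congr rfl fun i _ => ?_
    simp only [inner_ind_matOp, smul_smul, ← Finset.sum_smul]
    congr 1
    simp only [Matrix.mul_apply, Finset.mul_sum, Finset.sum_mul]
    push_cast [Finset.sum_mul]
    conv_lhs => rw [Finset.sum_comm]
    refine Finset.sum_congr rfl fun j _ => ?_
    refine Finset.sum_congr rfl fun k _ => ?_
    push_cast
    ring
  map_star' B := by
    show matOp n (star B) = star (matOp n B)
    rw [matOp, matOp, star_sum]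
    rw [Finset.sum_comm]
    refine Finset.sum_congr rfl fun i _ => ?_
    rw [star_sum]
    refine Finset.sum_congr rfl fun j _ => ?_
    rw [star_smul, rk_star]
    congr 1
    · rw [Matrix.star_apply, star_trivial, RCLike.star_def, Complex.conj_ofReal]
lemma Lp_coeFn_sum {ι : Type*} (s : Finset ι) (g : ι → L2) :
    ⇑(∑ i ∈ s, g i) =ᵐ[μ01] fun v => ∑ i ∈ s, g i v := by
  induction s using Finset.cons_induction with
  | empty => simp only [Finset.sum_empty]; exact Lp.coeFn_zero ℂ 2 μ01
  | cons i s hi ih =>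
      rw [Finset.sum_cons]
      filter_upwards [Lp.coeFn_add (g i) (∑ j ∈ s, g j), ih] with v h1 h2
      simp only [Finset.sum_cons]
      rw [h1, Pi.add_apply, h2]

lemma indC {n : ℕ} (j : Fin n) (u : ℝ) :
    (((part n j).indicator (1 : ℝ → ℝ) u : ℝ) : ℂ) = (part n j).indicator (fun _ => (1:ℂ)) u := by
  by_cases hu : u ∈ part n j <;> simp [hu]

lemma integrable_ind_mul {n : ℕ} (j : Fin n) (f : L2) :
    Integrable (fun u => (part n j).indicator (fun _ => (1:ℂ)) u * f u) μ01 := by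
  have hf : Integrable f μ01 := (Lp.memLp f).integrable (by norm_num)
  refine hf.bdd_mul (c := 1) ?_ (Filter.Eventually.of_forall fun u => ?_)
  · exact (measurable_const.indicator (part_meas n j)).aestronglyMeasurable
  · by_cases h : u ∈ part n j <;> simp [h]

lemma int_ind_mul {n : ℕ} (j : Fin n) (f : L2) :
    ∫ u, (part n j).indicator (fun _ => (1:ℂ)) u * f u ∂μ01 = ⟪ind n j, f⟫ := by
  rw [ind, MeasureTheory.L2.inner_indicatorConstLp_one (part_meas n j) (part_ne_top n j),
    ← MeasureTheory.integral_indicator (part_meas n j)]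
  congr 1
  ext u
  by_cases h : u ∈ part n j <;> simp [h]
lemma key_integral (n : ℕ) (B : Matrix (Fin n) (Fin n) ℝ) (f : L2) (v : ℝ) :
    (∫ u, ((inducedGraphon ((n:ℝ) • B) v u : ℝ) : ℂ) * f u ∂μ01)
      = ∑ i, ((∑ k, (((n : ℝ) * B i k : ℝ) : ℂ) * ⟪ind n k, f⟫) *
          (part n i).indicator (fun _ => (1:ℂ)) v)  := by
  have hint : ∀ (i j : Fin n), Integrable (fun u =>
      ((((n : ℝ) * B i j : ℝ) : ℂ) * (part n i).indicator (fun _ => (1:ℂ)) v) *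
        ((part n j).indicator (fun _ => (1:ℂ)) u * f u)) μ01 :=
    fun i j => (integrable_ind_mul j f).const_mul _
  have heq : ∀ u, ((inducedGraphon ((n:ℝ) • B) v u : ℝ) : ℂ) * f u
      = ∑ i, ∑ j, ((((n : ℝ) * B i j : ℝ) : ℂ) * (part n i).indicator (fun _ => (1:ℂ)) v) *
          ((part n j).indicator (fun _ => (1:ℂ)) u * f u) := by
    intro u
    simp only [inducedGraphon, Matrix.smul_apply, smul_eq_mul]
    push_cast
    simp only [Finset.sum_mul]
    refine Finset.sum_congr rfl fun i _ => Finset.sum_congr rfl fun j _ => ?_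
    rw [← indC, ← indC]
    push_cast
    ring
  rw [integral_congr_ae (Filter.Eventually.of_forall heq),
    integral_finset_sum _ (fun i _ => integrable_finset_sum _ (fun j _ => hint i j))]
  refine Finset.sum_congr rfl fun i _ => ?_
  rw [integral_finset_sum _ (fun j _ => hint i j), Finset.sum_mul]
  refine Finset.sum_congr rfl fun j _ => ?_
  rw [MeasureTheory.integral_const_mul, int_ind_mul]
  ring

lemma grso_matOp (n : ℕ) (B : Matrix (Fin n) (Fin n) ℝ) :
    IsGRSO (inducedGraphon ((n : ℝ) • B)) (matOp n B) := by
  intro f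
  have e : matOp n B f
      = ∑ i, ((∑ k, (((n : ℝ) * B i k : ℝ) : ℂ) * ⟪ind n k, f⟫) • ind n i) := by
    rw [matOp_apply]
    refine Finset.sum_congr rfl fun i _ => ?_
    rw [Finset.sum_smul]
    exact Finset.sum_congr rfl fun j _ => (smul_smul _ _ _)
  have hind : ∀ᵐ v ∂μ01, ∀ i : Fin n,
      (((∑ k, (((n : ℝ) * B i k : ℝ) : ℂ) * ⟪ind n k, f⟫) • ind n i : L2)) v
        = (∑ k, (((n : ℝ) * B i k : ℝ) : ℂ) * ⟪ind n k, f⟫) *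
            (part n i).indicator (fun _ => (1:ℂ)) v := by
    rw [MeasureTheory.ae_all_iff]
    intro i
    filter_upwards [Lp.coeFn_smul (∑ k, (((n : ℝ) * B i k : ℝ) : ℂ) * ⟪ind n k, f⟫) (ind n i),
      indicatorConstLp_coeFn (p := 2) (hs := part_meas n i) (hμs := part_ne_top n i) (c := (1:ℂ))]
      with v h1 h2
    rw [show ((((∑ k, (((n : ℝ) * B i k : ℝ) : ℂ) * ⟪ind n k, f⟫) • ind n i : L2)) : ℝ → ℂ) v
      = (∑ k, (((n : ℝ) * B i k : ℝ) : ℂ) * ⟪ind n k, f⟫) • ((ind n i : ℝ → ℂ) v) from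
        by rw [h1]; rfl, smul_eq_mul, ind, h2]
  rw [e]
  filter_upwards [Lp_coeFn_sum Finset.univ
      (fun i => ((∑ k, (((n : ℝ) * B i k : ℝ) : ℂ) * ⟪ind n k, f⟫) • ind n i : L2)), hind]
      with v hv hv2
  rw [hv, key_integral n B f v]
  exact Finset.sum_congr rfl fun i _ => hv2 i
lemma grso_unique {W : ℝ → ℝ → ℝ} {T₁ T₂ : L2 →L[ℂ] L2}
    (h1 : IsGRSO W T₁) (h2 : IsGRSO W T₂) : T₁ = T₂ := by
  refine ContinuousLinearMap.ext fun f => ?_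
  refine MeasureTheory.Lp.ext ?_
  filter_upwards [h1 f, h2 f] with v hv1 hv2
  rw [hv1, hv2]

lemma phi_continuous (n : ℕ) : Continuous (Phi n) := by
  have : Continuous ((Phi n : Matrix (Fin n) (Fin n) ℝ →ₗ[ℝ] (L2 →L[ℂ] L2))) :=
    LinearMap.continuous_of_finiteDimensional _
  exact this

/-- For symmetric `Δ` with GWM `A = nΔ` and continuous `h : ℝ → ℝ` with
`h(0) = 0`, one has `h(T_{W_A}) = T_{W_{n·h(Δ)}}` as bounded operators on `L²[0,1]`. -/
theorem statement2 (n : ℕ) (Δ : Matrix (Fin n) (Fin n) ℝ) (hΔ : Δ.IsSymm)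
    (h : ℝ → ℝ) (hh : Continuous h) (h0 : h 0 = 0)
    (T T' : L2 →L[ℂ] L2)
    (hT : IsGRSO (inducedGraphon ((n : ℝ) • Δ)) T)
    (hT' : IsGRSO (inducedGraphon ((n : ℝ) • cfc h Δ)) T') :
    cfc h T = T' := by
  have hSA : IsSelfAdjoint Δ := by
    show star Δ = Δ
    rw [Matrix.star_eq_conjTranspose, Matrix.conjTranspose_eq_transpose_of_trivial]
    exact hΔ
  have hTm : T = Phi n Δ := grso_unique hT (grso_matOp n Δ)
  have hT'm : T' = Phi n (cfc h Δ) := grso_unique hT' (grso_matOp n (cfc h Δ))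
  have hUniq : ContinuousMapZero.UniqueHom ℝ (Matrix (Fin n) (Fin n) ℝ) := by
    let _ : NormedRing (Matrix (Fin n) (Fin n) ℝ) := Matrix.linftyOpNormedRing
    let _ : NormedAlgebra ℝ (Matrix (Fin n) (Fin n) ℝ) := Matrix.linftyOpNormedAlgebra
    infer_instance
  have hPhiSA : IsSelfAdjoint (Phi n Δ) := by
    rw [IsSelfAdjoint, ← map_star, hSA.star_eq]
  haveI : CompactSpace (quasispectrum ℝ Δ) := by
    rw [← isCompact_iff_compactSpace, quasispectrum_eq_spectrum_union_zero]
    exact (Matrix.finite_real_spectrum (A := Δ)).isCompact.union isCompact_singleton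
  rw [hTm, hT'm]
  calc cfc h (Phi n Δ) = cfcₙ h (Phi n Δ) := by
        rw [cfcₙ_eq_cfc (hh.continuousOn) h0]
    _ = Phi n (cfcₙ h Δ) :=
        (NonUnitalStarAlgHom.map_cfcₙ (Phi n) h Δ (hh.continuousOn) h0
          (phi_continuous n) hSA hPhiSA).symm
    _ = Phi n (cfc h Δ) := by rw [cfcₙ_eq_cfc (hh.continuousOn) h0]
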